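/- Let D be a bipartite digraph with out-radius r >= 3 and order n. Then the number of arcs satisfies |A(D)| <= ceil(n(n-2)/4) + r - 4 + floor((n-r+3)^2/4). -/

import Mathlib

variable {V : Type*}

/-- `ReachWithin A k u v` means the directed distance from `u` to `v` is at most `k`. -/
def ReachWithin (A : V → V → Prop) : ℕ → V → V → Prop
  | 0, u, v => u = v
  | k+1, u, v => u = v ∨ ∃ w, A u w ∧ ReachWithin A k w v

/-- out-eccentricity of `v` is at most `r`. -/
def outEccLe (A : V → V → Prop) (r : ℕ) (v : V) : Prop :=
  ∀ u, ReachWithin A r v u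

/-- in-eccentricity of `v` is at most `r`. -/
def inEccLe (A : V → V → Prop) (r : ℕ) (v : V) : Prop :=
  ∀ u, ReachWithin A r u v

/-- The out-radius of the digraph `A` equals `r`. -/
def outRadiusIs (A : V → V → Prop) (r : ℕ) : Prop :=
  (∃ v, outEccLe A r v) ∧ ∀ v, ¬ outEccLe A (r - 1) v

/-- A digraph is strongly connected (biconnected) if every vertex reaches every other. -/
def StronglyConnected (A : V → V → Prop) : Prop :=
  ∀ u v, ∃ k, ReachWithin A k u v

/-- Number of arcs of the digraph. -/
noncomputable def arcCard (A : V → V → Prop) : ℕ :=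
  {p : V × V | A p.1 p.2}.ncard

noncomputable def outDeg (A : V → V → Prop) (v : V) : ℕ :=
  {w | A v w}.ncard

noncomputable def inDeg (A : V → V → Prop) (v : V) : ℕ :=
  {w | A w v}.ncard

noncomputable def totalDeg (A : V → V → Prop) (v : V) : ℕ :=
  outDeg A v + inDeg A v

/-- The directed distance from `u` to `v` equals `k`. -/
def DistEq (A : V → V → Prop) (k : ℕ) (u v : V) : Prop :=
  ReachWithin A k u v ∧ ∀ j < k, ¬ ReachWithin A j u v

/-- out-eccentricity as a natural number. -/
noncomputable def outEcc (A : V → V → Prop) (v : V) : ℕ :=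
  sInf {k | outEccLe A k v}

/-- in-eccentricity as a natural number. -/
noncomputable def inEcc (A : V → V → Prop) (v : V) : ℕ :=
  sInf {k | inEccLe A k v}

/-- `P` is a bipartition of the digraph `A`: every arc joins the two classes. -/
def Bipartition (A : V → V → Prop) (P : V → Prop) : Prop :=
  ∀ u v, A u v → (P u ↔ ¬ P v)

section Helpers

variable {A : V → V → Prop}

lemma reach_refl (k : ℕ) (u : V) : ReachWithin A k u u := by
  cases k with
  | zero => rfl
  | succ k => exact Or.inl rfl

lemma reach_mono {j k : ℕ} {u w : V} (h : j ≤ k) (hr : ReachWithin A j u w) :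
    ReachWithin A k u w := by
  induction j generalizing k u with
  | zero => cases hr; exact reach_refl _ _
  | succ j ih =>
    obtain ⟨k, rfl⟩ : ∃ k', k = k' + 1 := ⟨k - 1, by omega⟩
    rcases hr with rfl | ⟨w', hw', hr'⟩
    · exact Or.inl rfl
    · exact Or.inr ⟨w', hw', ih (by omega) hr'⟩

lemma reach_trans {j k : ℕ} {u w z : V} (h1 : ReachWithin A j u w)
    (h2 : ReachWithin A k w z) : ReachWithin A (j + k) u z := by
  induction j generalizing u with
  | zero => cases h1; simpa using h2
  | succ j ih =>
    rcases h1 with rfl | ⟨w', hw', hr'⟩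
    · exact reach_mono (by omega) h2
    · have h3 : ReachWithin A (j + k) w' z := ih hr'
      have he : j + 1 + k = (j + k) + 1 := by omega
      rw [he]
      exact Or.inr ⟨w', hw', h3⟩

lemma reach_arc {u w : V} (h : A u w) : ReachWithin A 1 u w :=
  Or.inr ⟨w, h, rfl⟩

lemma reach_last {k : ℕ} {u z : V} (h : ReachWithin A (k+1) u z) :
    u = z ∨ ∃ w, ReachWithin A k u w ∧ A w z := by
  induction k generalizing u with
  | zero =>
    rcases h with rfl | ⟨w, hw, rfl⟩
    · exact Or.inl rfl
    · exact Or.inr ⟨u, rfl, hw⟩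
  | succ k ih =>
    rcases h with rfl | ⟨w, hw, hr⟩
    · exact Or.inl rfl
    · rcases ih hr with rfl | ⟨w', h1, h2⟩
      · exact Or.inr ⟨u, reach_refl _ _, hw⟩
      · exact Or.inr ⟨w', Or.inr ⟨w, hw, h1⟩, h2⟩

/-- The purely numerical bound on `T = ∑ a i * a (i+1)`. -/
lemma Tbound (r n : ℕ) (hr : 3 ≤ r) (a : ℕ → ℕ)
    (ha1 : ∀ i ≤ r, 1 ≤ a i) (ha0 : a 0 = 1)
    (hsum : ∑ i ∈ Finset.range (r+1), a i = n) :
    4 * ((∑ i ∈ Finset.range r, a i * a (i+1) : ℕ) : ℤ) ≤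
      ((n : ℤ) - r + 3)^2 + 4*r - 16 := by
  set b : ℕ → ℤ := fun i => (a i : ℤ) - 1 with hb
  have hbnn : ∀ i ≤ r, 0 ≤ b i := by
    intro i hi
    have := ha1 i hi
    simp only [hb]
    omega
  have hb0 : b 0 = 0 := by simp [hb, ha0]
  set c : ℤ := (n : ℤ) - (r + 1) with hc
  have hsumb : ∑ i ∈ Finset.range (r+1), b i = c := by
    have hcast : (∑ i ∈ Finset.range (r+1), (a i : ℤ)) = (n : ℤ) := by
      rw [← Nat.cast_sum, hsum]
    simp only [hb, Finset.sum_sub_distrib, hcast, Finset.sum_const, Finset.card_range,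
      nsmul_eq_mul, mul_one, hc]
    push_cast
    ring
  -- even/odd split
  set S₁ : Finset ℕ := (Finset.range (r+1)).filter (fun i => Even i) with hS₁
  set S₂ : Finset ℕ := (Finset.range (r+1)).filter (fun i => ¬ Even i) with hS₂
  set Be : ℤ := ∑ i ∈ S₁, b i with hBe
  set Bo : ℤ := ∑ i ∈ S₂, b i with hBo
  have hBeBo : Be + Bo = c := by
    rw [hBe, hBo, Finset.sum_filter_add_sum_filter_not, hsumb]
  have hBenn : 0 ≤ Be := Finset.sum_nonneg (by
    intro i hi
    rw [hS₁, Finset.mem_filter, Finset.mem_range] at hi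
    exact hbnn i (by omega))
  have hBonn : 0 ≤ Bo := Finset.sum_nonneg (by
    intro i hi
    rw [hS₂, Finset.mem_filter, Finset.mem_range] at hi
    exact hbnn i (by omega))
  -- the adjacent-product bound
  have hadj : ∑ i ∈ Finset.range r, b i * b (i+1) ≤ Be * Bo := by
    set ι : ℕ → ℕ × ℕ := fun i => if Even i then (i, i+1) else (i+1, i) with hι
    have hstep : ∀ i ∈ Finset.range r, b i * b (i+1) = b (ι i).1 * b (ι i).2 := by
      intro i _
      by_cases h : Even i <;> simp [hι, h, mul_comm]
    rw [Finset.sum_congr rfl hstep]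
    have hinj : ∀ x ∈ Finset.range r, ∀ y ∈ Finset.range r, ι x = ι y → x = y := by
      intro x _ y _ h
      by_cases hx : Even x <;> by_cases hy : Even y <;>
        simp [hι, hx, hy, Prod.ext_iff] at h <;> omega
    have himg : ∑ p ∈ (Finset.range r).image ι, (fun p : ℕ × ℕ => b p.1 * b p.2) p
        = ∑ i ∈ Finset.range r, (fun p : ℕ × ℕ => b p.1 * b p.2) (ι i) :=
      Finset.sum_image hinj
    simp only at himg
    rw [← himg]
    have hsubset : (Finset.range r).image ι ⊆ S₁ ×ˢ S₂ := by
      intro p hp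
      rw [Finset.mem_image] at hp
      obtain ⟨i, hi, rfl⟩ := hp
      rw [Finset.mem_range] at hi
      rw [Finset.mem_product, hS₁, hS₂]
      by_cases h : Even i
      · simp only [hι, if_pos h, Finset.mem_filter, Finset.mem_range]
        refine ⟨⟨by omega, h⟩, by omega, ?_⟩
        rw [Nat.even_add_one]
        exact fun hc => hc h
      · simp only [hι, if_neg h, Finset.mem_filter, Finset.mem_range]
        refine ⟨⟨by omega, ?_⟩, by omega, h⟩
        rw [Nat.even_add_one]
        exact fun hc => h hc
    refine le_trans (Finset.sum_le_sum_of_subset_of_nonneg hsubset ?_) ?_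
    · intro p hp _
      rw [Finset.mem_product, hS₁, hS₂, Finset.mem_filter, Finset.mem_filter,
        Finset.mem_range, Finset.mem_range] at hp
      exact mul_nonneg (hbnn _ (by omega)) (hbnn _ (by omega))
    · rw [Finset.sum_product]
      rw [hBe, hBo, Finset.sum_mul_sum]
  -- partial sums
  have hpart1 : ∑ i ∈ Finset.range r, b i ≤ c := by
    have h1 : ∑ i ∈ Finset.range (r+1), b i = (∑ i ∈ Finset.range r, b i) + b r :=
      Finset.sum_range_succ _ _
    have hbr := hbnn r le_rfl
    rw [hsumb] at h1
    linarith
  have hpart2 : ∑ i ∈ Finset.range r, b (i+1) = c := by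
    have h := Finset.sum_range_succ' b r
    rw [hsumb, hb0] at h
    linarith
  -- expand T
  have hexp : ((∑ i ∈ Finset.range r, a i * a (i+1) : ℕ) : ℤ) =
      (∑ i ∈ Finset.range r, b i * b (i+1)) + (∑ i ∈ Finset.range r, b i)
        + (∑ i ∈ Finset.range r, b (i+1)) + r := by
    push_cast
    rw [← Finset.sum_add_distrib, ← Finset.sum_add_distrib]
    rw [show ((r : ℤ)) = ∑ _i ∈ Finset.range r, (1 : ℤ) by
      simp]
    rw [← Finset.sum_add_distrib]
    refine Finset.sum_congr rfl ?_
    intro i _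
    simp only [hb]
    ring
  have h4 : 4 * (Be * Bo) ≤ c^2 := by nlinarith [sq_nonneg (Be - Bo)]
  have hcn : ((n : ℤ) - r + 3) = c + 4 := by rw [hc]; ring
  rw [hexp, hcn]
  nlinarith [hadj, hpart1, hpart2, h4]

end Helpers

/-- A bipartite digraph of order `n` with out-radius `r ≥ 3` has at most
`⌈n(n-2)/4⌉ + r - 4 + ⌊(n-r+3)²/4⌋` arcs. -/
theorem stmt9 [Fintype V] (A : V → V → Prop) (hirr : Irreflexive A)
    (P : V → Prop) (hbip : Bipartition A P)
    (r : ℕ) (hr : 3 ≤ r) (hrad : outRadiusIs A r) :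
    (arcCard A : ℤ) ≤
      ((Fintype.card V : ℤ) * ((Fintype.card V : ℤ) - 2) + 3) / 4 + (r : ℤ) - 4 +
        ((Fintype.card V : ℤ) - (r : ℤ) + 3) ^ 2 / 4 := by
  classical
  obtain ⟨v, hv⟩ := hrad.1
  set n := Fintype.card V with hn
  -- level function
  set lvl : V → ℕ := fun u => sInf {k | ReachWithin A k v u} with hlvl
  have hmem : ∀ u, ReachWithin A (lvl u) v u := by
    intro u
    have h : sInf {k | ReachWithin A k v u} ∈ {k | ReachWithin A k v u} :=
      Nat.sInf_mem ⟨r, hv u⟩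
    exact h
  have hmin : ∀ u j, ReachWithin A j v u → lvl u ≤ j := by
    intro u j h
    exact Nat.sInf_le h
  have hle : ∀ u, lvl u ≤ r := fun u => hmin u r (hv u)
  have hlvlv : lvl v = 0 := Nat.le_zero.mp (hmin v 0 rfl)
  have hzero : ∀ u, lvl u = 0 → u = v := by
    intro u h
    have h2 : ReachWithin A 0 v u := by rw [← h]; exact hmem u
    exact h2.symm
  have harc : ∀ u w, A u w → lvl w ≤ lvl u + 1 := fun u w h =>
    hmin w _ (reach_trans (hmem u) (reach_arc h))
  have hpred : ∀ u i, lvl u = i + 1 → ∃ w, A w u ∧ lvl w = i := by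
    intro u i h
    have h2 : ReachWithin A (i+1) v u := by rw [← h]; exact hmem u
    rcases reach_last h2 with rfl | ⟨w, h3, h4⟩
    · omega
    · have h5 : lvl w ≤ i := hmin w i h3
      have h6 := harc w u h4
      exact ⟨w, h4, by omega⟩
  have hexr : ∃ u, lvl u = r := by
    have h2 := hrad.2 v
    rw [outEccLe] at h2
    push_neg at h2
    obtain ⟨u, hu⟩ := h2
    refine ⟨u, ?_⟩
    have h3 : ¬ lvl u ≤ r - 1 := fun h => hu (reach_mono h (hmem u))
    have := hle u
    omega
  have hlevels : ∀ i ≤ r, ∃ u, lvl u = i := by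
    obtain ⟨u0, hu0⟩ := hexr
    have key : ∀ d u, d ≤ lvl u → ∃ w, lvl w = lvl u - d := by
      intro d
      induction d with
      | zero => exact fun u _ => ⟨u, by omega⟩
      | succ d ih =>
        intro u hd
        obtain ⟨w, hw⟩ := ih u (by omega)
        have h1 : lvl w = (lvl u - d - 1) + 1 := by omega
        obtain ⟨w', _, hw'⟩ := hpred w _ h1
        exact ⟨w', by omega⟩
    intro i hi
    obtain ⟨w, hw⟩ := key (r - i) u0 (by omega)
    exact ⟨w, by omega⟩
  -- parity of levels matches the bipartition classes
  have hparity0 : ∀ k u, lvl u = k → (P u ↔ (Even (lvl u) ↔ P v)) := by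
    intro k
    induction k using Nat.strong_induction_on with
    | _ k ih =>
      intro u hk
      cases k with
      | zero =>
        have := hzero u hk
        subst this
        simp [hlvlv]
      | succ i =>
        obtain ⟨w, hwa, hwl⟩ := hpred u i hk
        have hb := hbip w u hwa
        have ihw := ih i (by omega) w hwl
        rw [hwl] at ihw
        rw [hk, Nat.even_add_one]
        tauto
  have hpar : ∀ u, P u ↔ (Even (lvl u) ↔ P v) := fun u => hparity0 (lvl u) u rfl
  -- finsets
  set L : ℕ → Finset V := fun i => Finset.univ.filter (fun u => lvl u = i) with hL
  set a : ℕ → ℕ := fun i => (L i).card with ha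
  set OddF : Finset V := Finset.univ.filter (fun u => ¬ Even (lvl u)) with hOddF
  set EvenF : Finset V := Finset.univ.filter (fun u => Even (lvl u)) with hEvenF
  set O := OddF.card with hO
  set E := EvenF.card with hE
  set ArcsF : Finset (V × V) := Finset.univ.filter (fun p => A p.1 p.2) with hArcsF
  have harcCard : arcCard A = ArcsF.card := by
    rw [arcCard, show {p : V × V | A p.1 p.2} = (ArcsF : Set (V × V)) by
      ext p; simp [hArcsF]]
    exact Set.ncard_coe_finset _
  set Allowed : Finset (V × V) := Finset.univ.filter
    (fun p => lvl p.2 ≤ lvl p.1 + 1 ∧ ¬ (Even (lvl p.1) ↔ Even (lvl p.2))) with hAllowed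
  have hsub : ArcsF ⊆ Allowed := by
    intro p hp
    rw [hArcsF, Finset.mem_filter] at hp
    rw [hAllowed, Finset.mem_filter]
    refine ⟨Finset.mem_univ _, harc _ _ hp.2, ?_⟩
    have h2 := hbip _ _ hp.2
    have h3 := hpar p.1
    have h4 := hpar p.2
    tauto
  -- the key lemma: every odd-level vertex misses some allowed out-arc
  have hkey : ∀ x, ¬ Even (lvl x) →
      ∃ w, (Even (lvl w) ∧ lvl w ≤ lvl x + 1) ∧ ¬ A x w := by
    intro x hx
    by_contra hcon
    push_neg at hcon
    have hx1 : 1 ≤ lvl x := by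
      rcases Nat.eq_zero_or_pos (lvl x) with h | h
      · exact absurd (by rw [h]; exact Even.zero) hx
      · exact h
    have hxm := Nat.not_even_iff.mp hx
    have s1 : ∀ z, lvl z ≤ lvl x + 2 → ReachWithin A 2 x z := by
      intro z hz
      by_cases hez : Even (lvl z)
      · have hzm := Nat.even_iff.mp hez
        have hle2 : lvl z ≤ lvl x + 1 := by omega
        exact reach_mono (by omega) (reach_arc (hcon z ⟨hez, hle2⟩))
      · have hzm := Nat.not_even_iff.mp hez
        have hz1 : lvl z = (lvl z - 1) + 1 := by omega
        obtain ⟨w, hwz, hww⟩ := hpred z _ hz1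
        have hew : Even (lvl w) := by rw [Nat.even_iff]; omega
        have hwle : lvl w ≤ lvl x + 1 := by omega
        exact reach_trans (reach_arc (hcon w ⟨hew, hwle⟩)) (reach_arc hwz)
    have s2 : ∀ k z, lvl z ≤ lvl x + 2 + k → ReachWithin A (2 + k) x z := by
      intro k
      induction k with
      | zero => exact fun z hz => s1 z (by omega)
      | succ k ih =>
        intro z hz
        by_cases h : lvl z ≤ lvl x + 2 + k
        · exact reach_mono (by omega) (ih z h)
        · have hz1 : lvl z = (lvl z - 1) + 1 := by omega
          obtain ⟨w, hwz, hww⟩ := hpred z _ hz1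
          have hwle : lvl w ≤ lvl x + 2 + k := by omega
          have h2 := reach_trans (ih w hwle) (reach_arc hwz)
          exact reach_mono (by omega) h2
    have hecc : outEccLe A (r - 1) x := by
      intro z
      have hzr := hle z
      have h2 := s2 (r - 2 - lvl x) z (by omega)
      exact reach_mono (by omega) h2
    exact hrad.2 x hecc
  -- counting: arcs + O ≤ Allowed.card
  have hmissing : ArcsF.card + O ≤ Allowed.card := by
    have hinj : O ≤ (Allowed \ ArcsF).card := by
      set g : V → V × V := fun x =>
        if h : ¬ Even (lvl x) then (x, Classical.choose (hkey x h)) else (x, x) with hg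
      refine Finset.card_le_card_of_injOn g ?_ ?_
      · intro x hx
        rw [Finset.mem_coe, hOddF, Finset.mem_filter] at hx
        have hx2 := hx.2
        have hspec := Classical.choose_spec (hkey x hx2)
        rw [Finset.mem_coe, Finset.mem_sdiff]
        constructor
        · rw [hAllowed, Finset.mem_filter]
          refine ⟨Finset.mem_univ _, ?_⟩
          simp only [hg, dif_pos hx2]
          refine ⟨hspec.1.2, ?_⟩
          intro hiff
          exact hx2 (hiff.mpr hspec.1.1)
        · rw [hArcsF, Finset.mem_filter]
          simp only [hg, dif_pos hx2]
          intro hmem2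
          exact hspec.2 hmem2.2
      · intro x hx y hy hxy
        rw [Finset.mem_coe, hOddF, Finset.mem_filter] at hx hy
        simp only [hg, dif_pos hx.2, dif_pos hy.2, Prod.ext_iff] at hxy
        exact hxy.1
    have hsdiff : (Allowed \ ArcsF).card + ArcsF.card = Allowed.card :=
      Finset.card_sdiff_add_card_eq_card hsub
    omega
  -- split Allowed into "up" pairs and "down" pairs
  set Up : Finset (V × V) := Allowed.filter (fun p => lvl p.2 = lvl p.1 + 1) with hUp
  set Down : Finset (V × V) := Allowed.filter (fun p => ¬ lvl p.2 = lvl p.1 + 1) with hDown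
  have hsplit : Allowed.card = Up.card + Down.card :=
    (Finset.card_filter_add_card_filter_not _).symm
  -- Up.card = T
  set T : ℕ := ∑ i ∈ Finset.range r, a i * a (i+1) with hT
  have hUpCard : Up.card = T := by
    have hfib : ∀ p ∈ Up, lvl p.1 ∈ Finset.range r := by
      intro p hp
      rw [hUp, Finset.mem_filter, hAllowed, Finset.mem_filter] at hp
      have := hle p.2
      rw [Finset.mem_range]
      omega
    rw [Finset.card_eq_sum_card_fiberwise hfib, hT]
    refine Finset.sum_congr rfl ?_
    intro i hi
    rw [Finset.mem_range] at hi
    have hfeq : Up.filter (fun p => lvl p.1 = i) = (L i) ×ˢ (L (i+1)) := by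
      ext p
      simp only [hUp, hAllowed, hL, Finset.mem_filter, Finset.mem_univ, true_and,
        Finset.mem_product]
      constructor
      · rintro ⟨⟨⟨h1, h2⟩, h3⟩, h4⟩
        exact ⟨h4, by omega⟩
      · rintro ⟨h1, h2⟩
        have hpar2 : ¬(Even (lvl p.1) ↔ Even (lvl p.2)) := by
          rw [h1, h2, Nat.even_add_one]
          tauto
        exact ⟨⟨⟨by omega, hpar2⟩, by omega⟩, h1⟩
    rw [hfeq, Finset.card_product]
  -- Down.card ≤ O * E
  have hDownlt : ∀ p ∈ Down, lvl p.2 < lvl p.1 ∧ ¬ (Even (lvl p.1) ↔ Even (lvl p.2)) := by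
    intro p hp
    simp only [hDown, hAllowed, Finset.mem_filter, Finset.mem_univ, true_and] at hp
    obtain ⟨⟨h1, h2⟩, h3⟩ := hp
    refine ⟨?_, h2⟩
    have h4 : lvl p.2 ≠ lvl p.1 := by
      intro h
      exact h2 (by rw [h])
    omega
  have hDownCard : Down.card ≤ O * E := by
    have hOE : (OddF ×ˢ EvenF).card = O * E := by
      rw [Finset.card_product]
    rw [← hOE]
    set g : V × V → V × V := fun p => if Even (lvl p.1) then (p.2, p.1) else (p.1, p.2)
      with hg
    refine Finset.card_le_card_of_injOn g ?_ ?_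
    · intro p hp
      obtain ⟨_, h2⟩ := hDownlt p hp
      rw [Finset.mem_coe, Finset.mem_product, hOddF, hEvenF, Finset.mem_filter, Finset.mem_filter]
      simp only [hg]
      by_cases h : Even (lvl p.1)
      · have h3 : ¬ Even (lvl p.2) := fun hc => h2 ⟨fun _ => hc, fun _ => h⟩
        rw [if_pos h]
        exact ⟨⟨Finset.mem_univ _, h3⟩, ⟨Finset.mem_univ _, h⟩⟩
      · have h3 : Even (lvl p.2) := by
          by_contra hc
          exact h2 ⟨fun hh => absurd hh h, fun hh => absurd hh hc⟩
        rw [if_neg h]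
        exact ⟨⟨Finset.mem_univ _, h⟩, ⟨Finset.mem_univ _, h3⟩⟩
    · intro p hp q hq hpq
      rw [Finset.mem_coe] at hp hq
      obtain ⟨hp1, _⟩ := hDownlt p hp
      obtain ⟨hq1, _⟩ := hDownlt q hq
      simp only [hg] at hpq
      split_ifs at hpq with h1 h2 h2 <;> simp only [Prod.mk.injEq] at hpq
      · exact Prod.ext_iff.mpr ⟨hpq.2, hpq.1⟩
      · exfalso
        obtain ⟨e1, e2⟩ := hpq
        rw [← e1, ← e2] at hq1
        omega
      · exfalso
        obtain ⟨e1, e2⟩ := hpq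
        rw [e1, e2] at hp1
        omega
      · exact Prod.ext_iff.mpr ⟨hpq.1, hpq.2⟩
  -- global sums
  have hsuma : ∑ i ∈ Finset.range (r+1), a i = n := by
    have hfib : ∀ u ∈ (Finset.univ : Finset V), lvl u ∈ Finset.range (r+1) := by
      intro u _
      rw [Finset.mem_range]
      have := hle u
      omega
    have := Finset.card_eq_sum_card_fiberwise hfib
    rw [hn, ← Finset.card_univ, this]
  have ha1 : ∀ i ≤ r, 1 ≤ a i := by
    intro i hi
    obtain ⟨u, hu⟩ := hlevels i hi
    rw [ha]
    refine Finset.card_pos.mpr ⟨u, ?_⟩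
    rw [hL, Finset.mem_filter]
    exact ⟨Finset.mem_univ _, hu⟩
  have ha0 : a 0 = 1 := by
    have hL0 : L 0 = {v} := by
      ext u
      simp only [hL, Finset.mem_filter, Finset.mem_univ, true_and, Finset.mem_singleton]
      constructor
      · intro h; exact hzero u h
      · rintro rfl; exact hlvlv
    simp only [ha, hL0, Finset.card_singleton]
  have hOEn : O + E = n := by
    have := Finset.card_filter_add_card_filter_not
      (s := (Finset.univ : Finset V)) (p := fun u => Even (lvl u))
    rw [hn, ← Finset.card_univ]
    rw [hO, hE, hOddF, hEvenF]
    omega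
  have hEpos : 1 ≤ E := by
    rw [hE, hEvenF]
    refine Finset.card_pos.mpr ⟨v, ?_⟩
    rw [Finset.mem_filter]
    exact ⟨Finset.mem_univ _, by rw [hlvlv]; exact Even.zero⟩
  -- collect the inequality in ℕ
  have hmain : ArcsF.card + O ≤ T + O * E := by
    calc ArcsF.card + O ≤ Allowed.card := hmissing
    _ = Up.card + Down.card := hsplit
    _ ≤ T + O * E := by
        have := hUpCard
        have := hDownCard
        omega
  -- numeric conclusion
  have hTb := Tbound r n hr a ha1 ha0 hsuma
  rw [← hT] at hTb
  have hX : 4 * ((O : ℤ) * ((E : ℤ) - 1)) ≤ (n : ℤ) * ((n : ℤ) - 2) + 1 := by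
    have h1 : (O : ℤ) + E = n := by exact_mod_cast hOEn
    have h2 : (1 : ℤ) ≤ E := by exact_mod_cast hEpos
    nlinarith [sq_nonneg ((O : ℤ) - (E : ℤ) + 1)]
  have harcs : (arcCard A : ℤ) ≤ (T : ℤ) + (O : ℤ) * ((E : ℤ) - 1) := by
    rw [harcCard]
    have : (ArcsF.card : ℤ) + O ≤ (T : ℤ) + (O : ℤ) * (E : ℤ) := by exact_mod_cast hmain
    nlinarith
  have hfin : ∀ q p X Tz arcs rr : ℤ, arcs ≤ Tz + X → 4*X ≤ q + 1 →
      4*Tz ≤ p + 4*rr - 16 → arcs ≤ (q+3)/4 + rr - 4 + p/4 := by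
    intro q p X Tz arcs rr h1 h2 h3
    omega
  exact hfin ((n : ℤ) * ((n : ℤ) - 2)) (((n : ℤ) - r + 3)^2) ((O : ℤ) * ((E : ℤ) - 1))
    (T : ℤ) (arcCard A) (r : ℤ) harcs hX hTb
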